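/- ∫₀¹ (x·K(x)² − 2x·E(x)·K(x)) dx = −1/2. -/

import Mathlib

open Real intervalIntegral

noncomputable def ellK (x : ℝ) : ℝ := ∫ θ in (0:ℝ)..(π/2), 1 / Real.sqrt (1 - x^2 * Real.sin θ ^ 2)

noncomputable def ellE (x : ℝ) : ℝ := ∫ θ in (0:ℝ)..(π/2), Real.sqrt (1 - x^2 * Real.sin θ ^ 2)

noncomputable def ellK' (x : ℝ) : ℝ := ellK (Real.sqrt (1 - x^2))

noncomputable def ellE' (x : ℝ) : ℝ := ellE (Real.sqrt (1 - x^2))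

-- u positivity
lemma upos {x θ : ℝ} (hx : x^2 < 1) : 0 < 1 - x^2 * Real.sin θ ^ 2 := by
  nlinarith [Real.sin_sq_le_one θ, sq_nonneg (x * Real.sin θ)]

lemma ule {x θ : ℝ} : 1 - x^2 * Real.sin θ ^ 2 ≤ 1 := by nlinarith [sq_nonneg x, sq_nonneg (Real.sin θ), sq_nonneg (x*Real.sin θ)]

lemma uge {x θ : ℝ} : 1 - x^2 ≤ 1 - x^2 * Real.sin θ ^ 2 := by
  nlinarith [Real.sin_sq_le_one θ, sq_nonneg x]

lemma uge_cos {x θ : ℝ} (hx : x^2 ≤ 1) : Real.cos θ ^2 ≤ 1 - x^2 * Real.sin θ ^ 2 := by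
  have := Real.sin_sq_add_cos_sq θ
  nlinarith [sq_nonneg (Real.sin θ)]

lemma contK {x : ℝ} (hx : x^2 < 1) : Continuous (fun θ => 1 / Real.sqrt (1 - x^2 * Real.sin θ ^ 2)) := by
  apply Continuous.div continuous_const
  · exact (continuous_const.sub (continuous_const.mul ((Real.continuous_sin).pow 2))).sqrt
  · intro θ
    exact (Real.sqrt_pos.2 (upos hx)).ne'

lemma contE {x : ℝ} : Continuous (fun θ => Real.sqrt (1 - x^2 * Real.sin θ ^ 2)) :=
  (continuous_const.sub (continuous_const.mul ((Real.continuous_sin).pow 2))).sqrt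

-- pointwise derivative in x of E-integrand
lemma hdE_pt {x : ℝ} (hx : x^2 < 1) (θ : ℝ) :
    HasDerivAt (fun y => Real.sqrt (1 - y^2 * Real.sin θ ^ 2))
      (-(x * Real.sin θ ^ 2) / Real.sqrt (1 - x^2 * Real.sin θ ^ 2)) x := by
  have hu : HasDerivAt (fun y : ℝ => 1 - y^2 * Real.sin θ ^ 2) (-(2 * x * Real.sin θ ^ 2)) x := by
    simpa using (((hasDerivAt_pow 2 x).mul_const (Real.sin θ ^ 2)).const_sub 1)
  have h0 := (upos hx (θ := θ)).ne'
  have := hu.sqrt h0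
  convert this using 1
  have hs : Real.sqrt (1 - x^2 * Real.sin θ ^ 2) ≠ 0 := (Real.sqrt_pos.2 (upos hx)).ne'
  field_simp

-- pointwise derivative in x of K-integrand
lemma hdK_pt {x : ℝ} (hx : x^2 < 1) (θ : ℝ) :
    HasDerivAt (fun y => 1 / Real.sqrt (1 - y^2 * Real.sin θ ^ 2))
      (x * Real.sin θ ^ 2 /
        ((1 - x^2 * Real.sin θ ^ 2) * Real.sqrt (1 - x^2 * Real.sin θ ^ 2))) x := by
  have hpos := upos hx (θ := θ)
  have hs : Real.sqrt (1 - x^2 * Real.sin θ ^ 2) ≠ 0 := by positivity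
  have := (hdE_pt hx θ).inv hs
  simp only [one_div]
  refine this.congr_deriv (Eq.symm ?_)
  rw [Real.sq_sqrt hpos.le]
  field_simp [hpos.ne']

lemma intable_K {x : ℝ} (hx : x^2 < 1) :
    IntervalIntegrable (fun θ => 1 / Real.sqrt (1 - x^2 * Real.sin θ ^ 2)) MeasureTheory.volume 0 (π/2) :=
  (contK hx).intervalIntegrable _ _

lemma intable_E {x : ℝ} :
    IntervalIntegrable (fun θ => Real.sqrt (1 - x^2 * Real.sin θ ^ 2)) MeasureTheory.volume 0 (π/2) :=
  contE.intervalIntegrable _ _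

lemma sqrt_u_le {x θ : ℝ} (h1 : (1:ℝ) - x^2 ≤ 1 - x^2 * Real.sin θ^2 := uge) :
    Real.sqrt (1 - x^2) ≤ Real.sqrt (1 - x^2 * Real.sin θ ^ 2) := Real.sqrt_le_sqrt h1

-- generic bound helpers
lemma abs_le_one_of_sq {y : ℝ} (h : y^2 < 1) : |y| ≤ 1 := by
  nlinarith [sq_abs y, abs_nonneg y]

lemma sin_sq_le_one' (θ : ℝ) : Real.sin θ ^ 2 ≤ 1 := by
  nlinarith [Real.sin_sq_le_one θ, sq_nonneg (Real.sin θ)]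

lemma u_lb {y b θ : ℝ} (hyb : y^2 < b^2) : 1 - b^2 ≤ 1 - y^2 * Real.sin θ ^ 2 := by
  nlinarith [sin_sq_le_one' θ, sq_nonneg (Real.sin θ), sq_nonneg y]

-- derivative of ellE
lemma hasDerivAt_ellE {x : ℝ} (hx : x ∈ Set.Ioo (0:ℝ) 1) :
    HasDerivAt ellE ((ellE x - ellK x) / x) x := by
  obtain ⟨hx0, hx1⟩ := hx
  set b : ℝ := (1 + x) / 2 with hb
  have hb1 : b < 1 := by simp only [hb]; linarith
  have hb0 : 0 < b := by simp only [hb]; linarith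
  have hε : (0:ℝ) < (1 - x)/2 := by linarith
  have hball : ∀ y ∈ Metric.ball x ((1-x)/2), y^2 < b^2 := by
    intro y hy
    rw [Metric.mem_ball, Real.dist_eq, abs_lt] at hy
    have h1 : |y| < b := by
      rw [abs_lt]; constructor <;> simp only [hb] <;> [nlinarith; nlinarith]
    nlinarith [abs_nonneg y, sq_abs y]
  have hx2 : x^2 < 1 := by nlinarith
  have hb2 : b^2 < 1 := by nlinarith
  have hb2pos : (0:ℝ) < 1 - b^2 := by linarith
  have key := intervalIntegral.hasDerivAt_integral_of_dominated_loc_of_deriv_le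
    (F := fun y θ => Real.sqrt (1 - y^2 * Real.sin θ ^ 2))
    (F' := fun y θ => -(y * Real.sin θ ^ 2) / Real.sqrt (1 - y^2 * Real.sin θ ^ 2))
    (x₀ := x) (a := 0) (b := π/2) (μ := MeasureTheory.volume)
    (bound := fun _ => 1 / Real.sqrt (1 - b^2)) (Metric.ball_mem_nhds x hε)
    (Filter.Eventually.of_forall fun y => contE.aestronglyMeasurable.restrict)
    intable_E
    ((Continuous.aestronglyMeasurable (by
      apply Continuous.div (continuous_const.mul (Real.continuous_sin.pow 2)).neg contE
      intro θ; exact (Real.sqrt_pos.2 (upos hx2)).ne')).restrict)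
    (Filter.Eventually.of_forall (by
      intro θ _ y hy
      have hyb := hball y hy
      have hy2' : y^2 < 1 := lt_trans hyb hb2
      have hu : (1:ℝ) - b^2 ≤ 1 - y^2 * Real.sin θ ^ 2 := u_lb hyb
      have hsb : Real.sqrt (1-b^2) ≤ Real.sqrt (1 - y^2 * Real.sin θ ^ 2) := Real.sqrt_le_sqrt hu
      have hnum : |(-(y * Real.sin θ ^ 2))| ≤ 1 := by
        rw [abs_neg, abs_mul, abs_of_nonneg (sq_nonneg (Real.sin θ))]
        nlinarith [abs_le_one_of_sq hy2', sin_sq_le_one' θ, abs_nonneg y, sq_nonneg (Real.sin θ)]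
      rw [Real.norm_eq_abs, abs_div, abs_of_nonneg (Real.sqrt_nonneg _)]
      exact div_le_div₀ zero_le_one hnum (Real.sqrt_pos.2 hb2pos) hsb))
    intervalIntegrable_const
    (Filter.Eventually.of_forall (by
      intro θ _ y hy
      exact hdE_pt (lt_trans (hball y hy) hb2) θ))
  have heq : (∫ θ in (0:ℝ)..(π/2), -(x * Real.sin θ ^ 2) / Real.sqrt (1 - x^2 * Real.sin θ ^ 2))
      = (ellE x - ellK x) / x := by
    have hpt : ∀ θ ∈ Set.uIcc (0:ℝ) (π/2), -(x * Real.sin θ ^ 2) / Real.sqrt (1 - x^2 * Real.sin θ ^ 2)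
        = (Real.sqrt (1 - x^2 * Real.sin θ ^ 2) - 1 / Real.sqrt (1 - x^2 * Real.sin θ ^ 2)) / x := by
      intro θ _
      have hpos := upos hx2 (θ := θ)
      have hs : Real.sqrt (1 - x^2 * Real.sin θ ^ 2) ≠ 0 := (Real.sqrt_pos.2 hpos).ne'
      have hsq := Real.sq_sqrt hpos.le
      field_simp
      nlinarith [hsq]
    rw [intervalIntegral.integral_congr hpt, intervalIntegral.integral_div,
      intervalIntegral.integral_sub intable_E (intable_K hx2)]
    rfl
  rw [heq] at key
  exact key.2

-- integration by parts identity in θ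
lemma theta_ibp {x : ℝ} (hx0 : 0 < x) (hx1 : x < 1) :
    (∫ θ in (0:ℝ)..(π/2), x * Real.sin θ ^ 2 /
        ((1 - x^2 * Real.sin θ ^ 2) * Real.sqrt (1 - x^2 * Real.sin θ ^ 2)))
      = (ellE x - (1 - x^2) * ellK x) / (x * (1 - x^2)) := by
  have hx2 : x^2 < 1 := by nlinarith
  have hxx : (0:ℝ) < 1 - x^2 := by linarith
  have hG : ∀ θ : ℝ, HasDerivAt
      (fun θ => -(Real.sin θ * Real.cos θ) / ((1 - x^2) * Real.sqrt (1 - x^2 * Real.sin θ ^ 2)))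
      (Real.sin θ ^ 2 / ((1 - x^2 * Real.sin θ ^ 2) * Real.sqrt (1 - x^2 * Real.sin θ ^ 2))
        - Real.cos θ ^ 2 / ((1 - x^2) * Real.sqrt (1 - x^2 * Real.sin θ ^ 2))) θ := by
    intro θ
    have hupos := upos hx2 (θ := θ)
    have hs : (0:ℝ) < Real.sqrt (1 - x^2 * Real.sin θ ^ 2) := Real.sqrt_pos.2 hupos
    have hu : HasDerivAt (fun θ => 1 - x^2 * Real.sin θ ^ 2)
        (-(x^2 * (2 * Real.sin θ * Real.cos θ))) θ := by
      have := ((Real.hasDerivAt_sin θ).pow 2).const_mul (x^2)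
      simpa [mul_comm, mul_assoc, mul_left_comm] using this.const_sub 1
    have hden := (hu.sqrt hupos.ne').const_mul (1 - x^2)
    have hnum : HasDerivAt (fun θ => -(Real.sin θ * Real.cos θ))
        (-(Real.cos θ * Real.cos θ + Real.sin θ * -Real.sin θ)) θ :=
      ((Real.hasDerivAt_sin θ).mul (Real.hasDerivAt_cos θ)).neg
    have hdne : (1 - x^2) * Real.sqrt (1 - x^2 * Real.sin θ ^ 2) ≠ 0 := by positivity
    have hdd := hnum.div hden hdne
    refine hdd.congr_deriv (Eq.symm ?_)
    have hsq : Real.sqrt (1 - x^2 * Real.sin θ ^ 2) ^ 2 = 1 - x^2 * Real.sin θ ^ 2 :=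
      Real.sq_sqrt hupos.le
    have hc2 : Real.cos θ ^ 2 = 1 - Real.sin θ ^ 2 := by
      have := Real.sin_sq_add_cos_sq θ; linarith
    set A := Real.sqrt (1 - x ^ 2 * Real.sin θ ^ 2) with hA
    have h4 : A ^ 4 = (1 - x ^ 2 * Real.sin θ ^ 2)^2 := by
      rw [show (4:ℕ) = 2*2 from rfl, pow_mul, hsq]
    rw [← hsq]
    field_simp
    rw [hc2]
    linear_combination (-(Real.sin θ ^ 2)) * hsq
  have hi1 : IntervalIntegrable (fun θ => Real.sin θ ^ 2 /
      ((1 - x^2 * Real.sin θ ^ 2) * Real.sqrt (1 - x^2 * Real.sin θ ^ 2))) MeasureTheory.volume 0 (π/2) := by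
    apply Continuous.intervalIntegrable
    apply Continuous.div (Real.continuous_sin.pow 2)
    · exact (continuous_const.sub (continuous_const.mul (Real.continuous_sin.pow 2))).mul contE
    · intro θ; have h1 := upos hx2 (θ := θ)
      have h2 : (0:ℝ) < Real.sqrt (1 - x^2 * Real.sin θ ^ 2) := Real.sqrt_pos.2 h1
      positivity
  have hi2 : IntervalIntegrable (fun θ => Real.cos θ ^ 2 /
      ((1 - x^2) * Real.sqrt (1 - x^2 * Real.sin θ ^ 2))) MeasureTheory.volume 0 (π/2) := by
    apply Continuous.intervalIntegrable
    apply Continuous.div (Real.continuous_cos.pow 2)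
    · exact continuous_const.mul contE
    · intro θ; have h1 := upos hx2 (θ := θ)
      have h2 : (0:ℝ) < Real.sqrt (1 - x^2 * Real.sin θ ^ 2) := Real.sqrt_pos.2 h1
      positivity
  have hFTC : (∫ θ in (0:ℝ)..(π/2),
      (Real.sin θ ^ 2 / ((1 - x^2 * Real.sin θ ^ 2) * Real.sqrt (1 - x^2 * Real.sin θ ^ 2))
        - Real.cos θ ^ 2 / ((1 - x^2) * Real.sqrt (1 - x^2 * Real.sin θ ^ 2)))) = 0 := by
    rw [intervalIntegral.integral_eq_sub_of_hasDerivAt (fun θ _ => hG θ) (hi1.sub hi2)]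
    simp
  have hsplit : (∫ θ in (0:ℝ)..(π/2), Real.sin θ ^ 2 /
        ((1 - x^2 * Real.sin θ ^ 2) * Real.sqrt (1 - x^2 * Real.sin θ ^ 2)))
      = ∫ θ in (0:ℝ)..(π/2), Real.cos θ ^ 2 / ((1 - x^2) * Real.sqrt (1 - x^2 * Real.sin θ ^ 2)) := by
    have h := intervalIntegral.integral_sub hi1 hi2
    rw [hFTC] at h
    linarith
  -- compute ∫ cos²/((1-x²)√u)
  have h2 : (∫ θ in (0:ℝ)..(π/2), Real.cos θ ^ 2 / ((1 - x^2) * Real.sqrt (1 - x^2 * Real.sin θ ^ 2)))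
      = (ellE x - (1 - x^2) * ellK x) / (x^2 * (1 - x^2)) := by
    have hpt : ∀ θ ∈ Set.uIcc (0:ℝ) (π/2),
        Real.cos θ ^ 2 / ((1 - x^2) * Real.sqrt (1 - x^2 * Real.sin θ ^ 2))
        = (Real.sqrt (1 - x^2 * Real.sin θ ^ 2)
            - (1 - x^2) * (1 / Real.sqrt (1 - x^2 * Real.sin θ ^ 2))) / (x^2 * (1 - x^2)) := by
      intro θ _
      have hupos := upos hx2 (θ := θ)
      have hs : Real.sqrt (1 - x^2 * Real.sin θ ^ 2) ≠ 0 := (Real.sqrt_pos.2 hupos).ne'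
      have hsq : Real.sqrt (1 - x^2 * Real.sin θ ^ 2) ^ 2 = 1 - x^2 * Real.sin θ ^ 2 :=
        Real.sq_sqrt hupos.le
      have hc2 : Real.cos θ ^ 2 = 1 - Real.sin θ ^ 2 := by
        have := Real.sin_sq_add_cos_sq θ; linarith
      rw [hc2]
      field_simp
      rw [mul_comm (Real.sin θ ^ 2), hsq]
      ring
    rw [intervalIntegral.integral_congr hpt, intervalIntegral.integral_div,
      intervalIntegral.integral_sub intable_E (((intable_K hx2)).const_mul (1 - x^2)),
      intervalIntegral.integral_const_mul]
    rfl
  have hpt1 : ∀ θ ∈ Set.uIcc (0:ℝ) (π/2),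
      x * Real.sin θ ^ 2 / ((1 - x^2 * Real.sin θ ^ 2) * Real.sqrt (1 - x^2 * Real.sin θ ^ 2))
      = x * (Real.sin θ ^ 2 / ((1 - x^2 * Real.sin θ ^ 2) * Real.sqrt (1 - x^2 * Real.sin θ ^ 2))) :=
    fun θ _ => mul_div_assoc x _ _
  rw [intervalIntegral.integral_congr hpt1, intervalIntegral.integral_const_mul, hsplit, h2]
  field_simp

-- derivative of ellK
lemma hasDerivAt_ellK {x : ℝ} (hx : x ∈ Set.Ioo (0:ℝ) 1) :
    HasDerivAt ellK ((ellE x - (1 - x^2) * ellK x) / (x * (1 - x^2))) x := by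
  obtain ⟨hx0, hx1⟩ := hx
  set b : ℝ := (1 + x) / 2 with hb
  have hb1 : b < 1 := by simp only [hb]; linarith
  have hb0 : 0 < b := by simp only [hb]; linarith
  have hε : (0:ℝ) < (1 - x)/2 := by linarith
  have hball : ∀ y ∈ Metric.ball x ((1-x)/2), y^2 < b^2 := by
    intro y hy
    rw [Metric.mem_ball, Real.dist_eq, abs_lt] at hy
    have h1 : |y| < b := by
      rw [abs_lt]; constructor <;> simp only [hb] <;> [nlinarith; nlinarith]
    nlinarith [abs_nonneg y, sq_abs y]
  have hx2 : x^2 < 1 := by nlinarith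
  have hb2 : b^2 < 1 := by nlinarith
  have hb2pos : (0:ℝ) < 1 - b^2 := by linarith
  have key := intervalIntegral.hasDerivAt_integral_of_dominated_loc_of_deriv_le
    (F := fun y θ => 1 / Real.sqrt (1 - y^2 * Real.sin θ ^ 2))
    (F' := fun y θ => y * Real.sin θ ^ 2 /
      ((1 - y^2 * Real.sin θ ^ 2) * Real.sqrt (1 - y^2 * Real.sin θ ^ 2)))
    (x₀ := x) (a := 0) (b := π/2) (μ := MeasureTheory.volume)
    (bound := fun _ => 1 / ((1 - b^2) * Real.sqrt (1 - b^2))) (Metric.ball_mem_nhds x hε)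
    ?_ (intable_K hx2) ?_ ?_ intervalIntegrable_const ?_
  · rw [theta_ibp hx0 hx1] at key
    exact key.2
  · filter_upwards [Metric.ball_mem_nhds x hε] with y hy
    exact ((contK (lt_trans (hball y hy) hb2)).aestronglyMeasurable).restrict
  · refine (Continuous.aestronglyMeasurable ?_).restrict
    apply Continuous.div (continuous_const.mul (Real.continuous_sin.pow 2))
    · exact (continuous_const.sub (continuous_const.mul (Real.continuous_sin.pow 2))).mul contE
    · intro θ
      have h1 := upos hx2 (θ := θ)
      have h2 : (0:ℝ) < Real.sqrt (1 - x^2 * Real.sin θ ^ 2) := Real.sqrt_pos.2 h1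
      positivity
  · refine Filter.Eventually.of_forall ?_
    intro θ _ y hy
    have hyb := hball y hy
    have hy2' : y^2 < 1 := lt_trans hyb hb2
    have hu : (1:ℝ) - b^2 ≤ 1 - y^2 * Real.sin θ ^ 2 := u_lb hyb
    have hupos := upos hy2' (θ := θ)
    have hnum : |y * Real.sin θ ^ 2| ≤ 1 := by
      rw [abs_mul, abs_of_nonneg (sq_nonneg (Real.sin θ))]
      nlinarith [abs_le_one_of_sq hy2', sin_sq_le_one' θ, abs_nonneg y, sq_nonneg (Real.sin θ)]
    have hden : (1 - b^2) * Real.sqrt (1 - b^2)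
        ≤ (1 - y^2 * Real.sin θ ^ 2) * Real.sqrt (1 - y^2 * Real.sin θ ^ 2) := by
      exact mul_le_mul hu (Real.sqrt_le_sqrt hu) (Real.sqrt_nonneg _) hupos.le
    rw [Real.norm_eq_abs, abs_div, abs_of_nonneg (by positivity :
      (0:ℝ) ≤ (1 - y^2 * Real.sin θ ^ 2) * Real.sqrt (1 - y^2 * Real.sin θ ^ 2))]
    exact div_le_div₀ zero_le_one hnum (by positivity) hden
  · refine Filter.Eventually.of_forall ?_
    intro θ _ y hy
    exact hdK_pt (lt_trans (hball y hy) hb2) θ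

-- basic bounds
lemma ellK_ge {x : ℝ} (hx2 : x^2 < 1) : π/2 ≤ ellK x := by
  have h : ∀ θ ∈ Set.Icc (0:ℝ) (π/2), (1:ℝ) ≤ 1 / Real.sqrt (1 - x^2 * Real.sin θ ^ 2) := by
    intro θ _
    have h1 := upos hx2 (θ := θ)
    rw [le_div_iff₀ (Real.sqrt_pos.2 h1), one_mul]
    exact Real.sqrt_le_one.2 ule
  calc π/2 = ∫ _ in (0:ℝ)..(π/2), (1:ℝ) := by simp
  _ ≤ ellK x := intervalIntegral.integral_mono_on (by positivity)
      intervalIntegrable_const (intable_K hx2) h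

lemma ellK_nonneg {x : ℝ} (hx2 : x^2 < 1) : 0 ≤ ellK x :=
  le_trans (by positivity) (ellK_ge hx2)

lemma ellK_le0 {x : ℝ} (hx2 : x^2 < 1) : ellK x ≤ (π/2) / (1 - x^2) := by
  have hxx : (0:ℝ) < 1 - x^2 := by nlinarith [sq_nonneg x]
  have h : ∀ θ ∈ Set.Icc (0:ℝ) (π/2),
      1 / Real.sqrt (1 - x^2 * Real.sin θ ^ 2) ≤ 1 / (1 - x^2) := by
    intro θ _
    apply one_div_le_one_div_of_le hxx
    calc (1:ℝ) - x^2 ≤ Real.sqrt (1 - x^2) := by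
          nlinarith [Real.sq_sqrt hxx.le, Real.sqrt_nonneg (1-x^2), Real.sqrt_le_one.2 (by nlinarith [sq_nonneg x] : (1:ℝ) - x^2 ≤ 1)]
    _ ≤ Real.sqrt (1 - x^2 * Real.sin θ ^ 2) := Real.sqrt_le_sqrt uge
  calc ellK x ≤ ∫ _ in (0:ℝ)..(π/2), 1/(1 - x^2) :=
        intervalIntegral.integral_mono_on (by positivity) (intable_K hx2)
          intervalIntegrable_const h
  _ = (π/2) / (1 - x^2) := by simp [div_eq_mul_inv]

lemma ellE_le {x : ℝ} : ellE x ≤ π/2 := by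
  have h : ∀ θ ∈ Set.Icc (0:ℝ) (π/2), Real.sqrt (1 - x^2 * Real.sin θ ^ 2) ≤ 1 := by
    intro θ _; exact Real.sqrt_le_one.2 ule
  calc ellE x ≤ ∫ _ in (0:ℝ)..(π/2), (1:ℝ) :=
        intervalIntegral.integral_mono_on (by positivity) intable_E intervalIntegrable_const h
  _ = π/2 := by simp

lemma ellE_nonneg {x : ℝ} : 0 ≤ ellE x :=
  intervalIntegral.integral_nonneg (by positivity) (fun θ _ => Real.sqrt_nonneg _)

lemma ellE_ge0 {x : ℝ} : (π/2) * (1 - x^2) ≤ ellE x := by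
  rcases le_or_gt 1 (x^2) with h | hx2
  · have : (π/2) * (1 - x^2) ≤ 0 := by nlinarith [Real.pi_pos]
    exact le_trans this ellE_nonneg
  have hxx : (0:ℝ) < 1 - x^2 := by linarith
  have h : ∀ θ ∈ Set.Icc (0:ℝ) (π/2), (1 - x^2 : ℝ) ≤ Real.sqrt (1 - x^2 * Real.sin θ ^ 2) := by
    intro θ _
    calc (1:ℝ) - x^2 ≤ Real.sqrt (1 - x^2) := by
          nlinarith [Real.sq_sqrt hxx.le, Real.sqrt_nonneg (1-x^2), Real.sqrt_le_one.2 (by nlinarith [sq_nonneg x] : (1:ℝ) - x^2 ≤ 1)]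
    _ ≤ _ := Real.sqrt_le_sqrt uge
  calc (π/2) * (1 - x^2) = ∫ _ in (0:ℝ)..(π/2), (1 - x^2 : ℝ) := by simp; ring
  _ ≤ ellE x := intervalIntegral.integral_mono_on (by positivity)
      intervalIntegrable_const intable_E h

lemma ellE_ge_one {x : ℝ} (hx2 : x^2 ≤ 1) : 1 ≤ ellE x := by
  have h : ∀ θ ∈ Set.Icc (0:ℝ) (π/2), Real.cos θ ≤ Real.sqrt (1 - x^2 * Real.sin θ ^ 2) := by
    intro θ _
    calc Real.cos θ ≤ |Real.cos θ| := le_abs_self _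
    _ = Real.sqrt (Real.cos θ ^ 2) := (Real.sqrt_sq_eq_abs _).symm
    _ ≤ _ := Real.sqrt_le_sqrt (uge_cos hx2)
  calc (1:ℝ) = ∫ θ in (0:ℝ)..(π/2), Real.cos θ := by simp
  _ ≤ ellE x := intervalIntegral.integral_mono_on (by positivity)
      (Real.continuous_cos.intervalIntegrable _ _) intable_E h

lemma sqrt_add_le' {a b : ℝ} (ha : 0 ≤ a) (hb : 0 ≤ b) :
    Real.sqrt (a + b) ≤ Real.sqrt a + Real.sqrt b := by
  rw [show Real.sqrt a + Real.sqrt b = Real.sqrt ((Real.sqrt a + Real.sqrt b)^2) from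
    (Real.sqrt_sq (by positivity)).symm]
  apply Real.sqrt_le_sqrt
  nlinarith [Real.sq_sqrt ha, Real.sq_sqrt hb, Real.sqrt_nonneg a, Real.sqrt_nonneg b]

lemma ellE_le_one_add {x : ℝ} (hx2 : x^2 ≤ 1) :
    ellE x ≤ 1 + (π/2) * Real.sqrt (1 - x^2) := by
  have h : ∀ θ ∈ Set.Icc (0:ℝ) (π/2),
      Real.sqrt (1 - x^2 * Real.sin θ ^ 2) ≤ Real.cos θ + Real.sqrt (1 - x^2) := by
    intro θ hθ
    have hcos : 0 ≤ Real.cos θ := Real.cos_nonneg_of_mem_Icc ⟨by linarith [hθ.1, Real.pi_pos], hθ.2⟩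
    calc Real.sqrt (1 - x^2 * Real.sin θ ^ 2) ≤ Real.sqrt (Real.cos θ ^ 2 + (1 - x^2)) := by
          apply Real.sqrt_le_sqrt
          have := Real.sin_sq_add_cos_sq θ
          nlinarith [sq_nonneg (Real.sin θ), sq_nonneg x]
    _ ≤ Real.sqrt (Real.cos θ ^ 2) + Real.sqrt (1 - x^2) := sqrt_add_le' (by positivity) (by linarith)
    _ = Real.cos θ + Real.sqrt (1 - x^2) := by rw [Real.sqrt_sq_eq_abs, abs_of_nonneg hcos]
  calc ellE x ≤ ∫ θ in (0:ℝ)..(π/2), (Real.cos θ + Real.sqrt (1 - x^2)) :=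
        intervalIntegral.integral_mono_on (by positivity) intable_E
          ((Real.continuous_cos.add continuous_const).intervalIntegrable _ _) h
  _ = 1 + (π/2) * Real.sqrt (1 - x^2) := by
      rw [intervalIntegral.integral_add (Real.continuous_cos.intervalIntegrable _ _)
        intervalIntegrable_const]
      simp [mul_comm]

-- main upper bound for K near 1
lemma ellK_le_main {x : ℝ} (hx0 : 0 ≤ x) (hx1 : x < 1) :
    ellK x ≤ π / Real.sqrt (Real.sqrt (1 - x^2)) := by
  have hx2 : x^2 < 1 := by nlinarith
  have hxx : (0:ℝ) < 1 - x^2 := by linarith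
  set c : ℝ := Real.sqrt (Real.sqrt (1 - x^2)) with hc
  have hc0 : 0 < c := Real.sqrt_pos.2 (Real.sqrt_pos.2 hxx)
  have hc1 : c ≤ 1 := Real.sqrt_le_one.2 (Real.sqrt_le_one.2 (by nlinarith [sq_nonneg x]))
  have hc2 : c^2 = Real.sqrt (1 - x^2) := Real.sq_sqrt (Real.sqrt_nonneg _)
  set t : ℝ := π/2 - π/2 * c with ht
  have ht0 : 0 ≤ t := by
    simp only [ht]; nlinarith [Real.pi_pos, hc1, hc0]
  have ht2 : t ≤ π/2 := by
    simp only [ht]; nlinarith [Real.pi_pos, hc1, hc0]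
  have hcost : c ≤ Real.cos t := by
    have : Real.cos t = Real.sin (π/2 * c) := by
      rw [ht, Real.cos_pi_div_two_sub]
    rw [this]
    have := Real.mul_le_sin (x := π/2 * c) (by positivity) (by nlinarith [Real.pi_pos, hc1, hc0])
    calc c = 2/π * (π/2 * c) := by field_simp
    _ ≤ Real.sin (π/2 * c) := this
  have hsplit := intervalIntegral.integral_add_adjacent_intervals
    (a := (0:ℝ)) (b := t) (c := π/2) (μ := MeasureTheory.volume)
    ((contK hx2).intervalIntegrable _ _) ((contK hx2).intervalIntegrable _ _)
  have hb1 : (∫ θ in (0:ℝ)..t, 1 / Real.sqrt (1 - x^2 * Real.sin θ ^ 2)) ≤ t * (1/c) := by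
    have h : ∀ θ ∈ Set.Icc (0:ℝ) t, 1 / Real.sqrt (1 - x^2 * Real.sin θ ^ 2) ≤ 1/c := by
      intro θ hθ
      apply one_div_le_one_div_of_le hc0
      calc c ≤ Real.cos t := hcost
      _ ≤ Real.cos θ := Real.cos_le_cos_of_nonneg_of_le_pi hθ.1
          (ht2.trans (by linarith [Real.pi_pos])) hθ.2
      _ ≤ |Real.cos θ| := le_abs_self _
      _ = Real.sqrt (Real.cos θ ^2) := (Real.sqrt_sq_eq_abs _).symm
      _ ≤ _ := Real.sqrt_le_sqrt (uge_cos hx2.le)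
    calc (∫ θ in (0:ℝ)..t, 1 / Real.sqrt (1 - x^2 * Real.sin θ ^ 2))
        ≤ ∫ _ in (0:ℝ)..t, 1/c := intervalIntegral.integral_mono_on ht0
          ((contK hx2).intervalIntegrable _ _) intervalIntegrable_const h
    _ = t * (1/c) := by simp
  have hb2 : (∫ θ in t..(π/2), 1 / Real.sqrt (1 - x^2 * Real.sin θ ^ 2)) ≤ (π/2 - t) * (1/c^2) := by
    have h : ∀ θ ∈ Set.Icc t (π/2), 1 / Real.sqrt (1 - x^2 * Real.sin θ ^ 2) ≤ 1/c^2 := by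
      intro θ _
      apply one_div_le_one_div_of_le (by positivity)
      rw [hc2]
      exact Real.sqrt_le_sqrt uge
    calc (∫ θ in t..(π/2), 1 / Real.sqrt (1 - x^2 * Real.sin θ ^ 2))
        ≤ ∫ _ in t..(π/2), 1/c^2 := intervalIntegral.integral_mono_on ht2
          ((contK hx2).intervalIntegrable _ _) intervalIntegrable_const h
    _ = (π/2 - t) * (1/c^2) := by simp
  have hK : ellK x = (∫ θ in (0:ℝ)..t, 1 / Real.sqrt (1 - x^2 * Real.sin θ ^ 2))
      + ∫ θ in t..(π/2), 1 / Real.sqrt (1 - x^2 * Real.sin θ ^ 2) := hsplit.symm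
  rw [hK]
  have hts : π/2 - t = π/2 * c := by rw [ht]; ring
  calc _ ≤ t * (1/c) + (π/2 - t) * (1/c^2) := add_le_add hb1 hb2
  _ ≤ (π/2) * (1/c) + (π/2 * c) * (1/c^2) := by
      rw [hts]
      have h1 : t * (1/c) ≤ (π/2) * (1/c) := by
        apply mul_le_mul_of_nonneg_right ht2 (by positivity)
      linarith
  _ = π / c := by field_simp; ring

lemma mem_near_zero : ∀ᶠ x in nhdsWithin (0:ℝ) (Set.Ioi 0), x ∈ Set.Ioo (0:ℝ) 1 :=
  Ioo_mem_nhdsGT_of_mem ⟨le_refl 0, one_pos⟩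

lemma mem_near_one : ∀ᶠ x in nhdsWithin (1:ℝ) (Set.Iio 1), x ∈ Set.Ioo (0:ℝ) 1 :=
  Ioo_mem_nhdsLT_of_mem ⟨one_pos, le_refl 1⟩

lemma tendsto_ellK_zero : Filter.Tendsto ellK (nhdsWithin 0 (Set.Ioi 0)) (nhds (π/2)) := by
  apply tendsto_of_tendsto_of_tendsto_of_le_of_le'
    (g := fun _ : ℝ => π/2) (h := fun x : ℝ => (π/2) / (1 - x^2))
  · exact tendsto_const_nhds
  · have h0 : ContinuousAt (fun x : ℝ => (π/2)/(1-x^2)) 0 := by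
      apply ContinuousAt.div continuousAt_const (by fun_prop) (by norm_num)
    have := h0.tendsto.mono_left (nhdsWithin_le_nhds (s := Set.Ioi (0:ℝ)))
    norm_num at this
    exact this
  · filter_upwards [mem_near_zero] with x hx
    exact ellK_ge (by nlinarith [hx.1, hx.2])
  · filter_upwards [mem_near_zero] with x hx
    exact ellK_le0 (by nlinarith [hx.1, hx.2])

lemma tendsto_ellE_zero : Filter.Tendsto ellE (nhdsWithin 0 (Set.Ioi 0)) (nhds (π/2)) := by
  apply tendsto_of_tendsto_of_tendsto_of_le_of_le'
    (g := fun x : ℝ => (π/2) * (1 - x^2)) (h := fun _ : ℝ => π/2)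
  · have hc : Continuous (fun x : ℝ => (π/2) * (1 - x^2)) := by continuity
    have := (hc.tendsto 0).mono_left (nhdsWithin_le_nhds (s := Set.Ioi (0:ℝ)))
    norm_num at this
    exact this
  · exact tendsto_const_nhds
  · filter_upwards with x; exact ellE_ge0
  · filter_upwards with x; exact ellE_le

lemma tendsto_ellE_one : Filter.Tendsto ellE (nhdsWithin 1 (Set.Iio 1)) (nhds 1) := by
  apply tendsto_of_tendsto_of_tendsto_of_le_of_le'
    (g := fun _ : ℝ => (1:ℝ)) (h := fun x : ℝ => 1 + (π/2) * Real.sqrt (1 - x^2))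
  · exact tendsto_const_nhds
  · have hc : Continuous (fun x : ℝ => 1 + (π/2) * Real.sqrt (1 - x^2)) := by continuity
    have := (hc.tendsto 1).mono_left (nhdsWithin_le_nhds (s := Set.Iio (1:ℝ)))
    norm_num [Real.sqrt_zero] at this
    exact this
  · filter_upwards [mem_near_one] with x hx
    exact ellE_ge_one (by nlinarith [hx.1, hx.2])
  · filter_upwards [mem_near_one] with x hx
    exact ellE_le_one_add (by nlinarith [hx.1, hx.2])

lemma tendsto_K2 : Filter.Tendsto (fun x => (1 - x^2) * ellK x ^2)
    (nhdsWithin 1 (Set.Iio 1)) (nhds 0) := by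
  apply tendsto_of_tendsto_of_tendsto_of_le_of_le'
    (g := fun _ : ℝ => (0:ℝ)) (h := fun x : ℝ => π^2 * Real.sqrt (1 - x^2))
  · exact tendsto_const_nhds
  · have hc : Continuous (fun x : ℝ => π^2 * Real.sqrt (1 - x^2)) := by continuity
    have := (hc.tendsto 1).mono_left (nhdsWithin_le_nhds (s := Set.Iio (1:ℝ)))
    norm_num [Real.sqrt_zero] at this
    exact this
  · filter_upwards [mem_near_one] with x hx
    have hx2 : x^2 < 1 := by nlinarith [hx.1, hx.2]
    have h1 := ellK_nonneg hx2
    have hxx : (0:ℝ) < 1 - x^2 := by linarith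
    positivity
  · filter_upwards [mem_near_one] with x hx
    have hx2 : x^2 < 1 := by nlinarith [hx.1, hx.2]
    have hxx : (0:ℝ) < 1 - x^2 := by linarith
    have hKb := ellK_le_main hx.1.le hx.2
    have hK0 := ellK_nonneg hx2
    have hc0 : 0 < Real.sqrt (Real.sqrt (1 - x^2)) := Real.sqrt_pos.2 (Real.sqrt_pos.2 hxx)
    have hc2 : Real.sqrt (Real.sqrt (1 - x^2)) ^ 2 = Real.sqrt (1 - x^2) :=
      Real.sq_sqrt (Real.sqrt_nonneg _)
    have hK2 : ellK x ^ 2 ≤ π^2 / Real.sqrt (1 - x^2) := by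
      calc ellK x ^2 ≤ (π / Real.sqrt (Real.sqrt (1 - x^2)))^2 := by
            apply pow_le_pow_left₀ hK0 hKb
      _ = π^2 / Real.sqrt (1 - x^2) := by rw [div_pow, hc2]
    have hsq : (0:ℝ) < Real.sqrt (1 - x^2) := Real.sqrt_pos.2 hxx
    calc (1 - x^2) * ellK x ^2 ≤ (1 - x^2) * (π^2 / Real.sqrt (1 - x^2)) :=
          mul_le_mul_of_nonneg_left hK2 hxx.le
    _ = π^2 * Real.sqrt (1 - x^2) := by
        have h := Real.sq_sqrt hxx.le
        field_simp
        nlinarith [h]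

lemma tendsto_KE : Filter.Tendsto (fun x => (1 - x^2) * ellK x * ellE x)
    (nhdsWithin 1 (Set.Iio 1)) (nhds 0) := by
  apply tendsto_of_tendsto_of_tendsto_of_le_of_le'
    (g := fun _ : ℝ => (0:ℝ))
    (h := fun x : ℝ => (π^2/2) * (Real.sqrt (1 - x^2) * Real.sqrt (Real.sqrt (1 - x^2))))
  · exact tendsto_const_nhds
  · have hc : Continuous (fun x : ℝ =>
        (π^2/2) * (Real.sqrt (1 - x^2) * Real.sqrt (Real.sqrt (1 - x^2)))) := by continuity
    have := (hc.tendsto 1).mono_left (nhdsWithin_le_nhds (s := Set.Iio (1:ℝ)))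
    norm_num [Real.sqrt_zero] at this
    exact this
  · filter_upwards [mem_near_one] with x hx
    have hx2 : x^2 < 1 := by nlinarith [hx.1, hx.2]
    have h1 := ellK_nonneg hx2
    have h2 := ellE_nonneg (x := x)
    have hxx : (0:ℝ) < 1 - x^2 := by linarith
    positivity
  · filter_upwards [mem_near_one] with x hx
    have hx2 : x^2 < 1 := by nlinarith [hx.1, hx.2]
    have hxx : (0:ℝ) < 1 - x^2 := by linarith
    have hKb := ellK_le_main hx.1.le hx.2
    have hK0 := ellK_nonneg hx2
    have hc0 : 0 < Real.sqrt (Real.sqrt (1 - x^2)) := Real.sqrt_pos.2 (Real.sqrt_pos.2 hxx)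
    have hc2 : Real.sqrt (Real.sqrt (1 - x^2)) ^ 2 = Real.sqrt (1 - x^2) :=
      Real.sq_sqrt (Real.sqrt_nonneg _)
    have hsq2 : Real.sqrt (1 - x^2) ^ 2 = 1 - x^2 := Real.sq_sqrt hxx.le
    have hE := ellE_le (x := x)
    have hE0 := ellE_nonneg (x := x)
    have key : (1 - x^2) / Real.sqrt (Real.sqrt (1 - x^2))
        = Real.sqrt (1 - x^2) * Real.sqrt (Real.sqrt (1 - x^2)) := by
      rw [eq_comm, eq_div_iff hc0.ne']
      nlinarith [hc2, hsq2]
    calc (1 - x^2) * ellK x * ellE x ≤ (1 - x^2) * ellK x * (π/2) :=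
          mul_le_mul_of_nonneg_left hE (by positivity)
    _ ≤ (1 - x^2) * (π / Real.sqrt (Real.sqrt (1 - x^2))) * (π/2) :=
          mul_le_mul_of_nonneg_right (mul_le_mul_of_nonneg_left hKb hxx.le) (by positivity)
    _ = (π^2/2) * (Real.sqrt (1 - x^2) * Real.sqrt (Real.sqrt (1 - x^2))) := by
          rw [← key]; field_simp

noncomputable def Fell (x : ℝ) : ℝ :=
  (x^2 - 1)/2 * ellK x^2 + (1 - x^2) * (ellK x * ellE x) - ellE x^2/2

lemma hasDerivAt_Fell {x : ℝ} (hx : x ∈ Set.Ioo (0:ℝ) 1) :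
    HasDerivAt Fell (x * ellK x ^ 2 - 2 * x * ellE x * ellK x) x := by
  obtain ⟨hx0, hx1⟩ := hx
  have hx2 : x^2 < 1 := by nlinarith
  have hxx : (0:ℝ) < 1 - x^2 := by linarith
  have hK := hasDerivAt_ellK ⟨hx0, hx1⟩
  have hE := hasDerivAt_ellE ⟨hx0, hx1⟩
  have h1 := (((hasDerivAt_pow 2 x).sub_const 1).div_const 2).mul (hK.pow 2)
  have h2 := ((hasDerivAt_pow 2 x).const_sub 1).mul (hK.mul hE)
  have h3 := (hE.pow 2).div_const 2
  have htot := (h1.add h2).sub h3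
  refine htot.congr_deriv (Eq.symm ?_)
  simp only [Pi.pow_apply, Pi.mul_apply]
  field_simp
  ring

lemma contOn_f' : ContinuousOn (fun x => x * ellK x ^ 2 - 2 * x * ellE x * ellK x)
    (Set.Ioo (0:ℝ) 1) := by
  intro x hx
  have hK := (hasDerivAt_ellK hx).continuousAt
  have hE := (hasDerivAt_ellE hx).continuousAt
  exact ((continuousAt_id.mul (hK.pow 2)).sub
    (((continuousAt_const.mul continuousAt_id).mul hE).mul hK)).continuousWithinAt

lemma bound_intable : IntervalIntegrable (fun x : ℝ => 2*π^2 * ((1-x) ^ (-(1/2) : ℝ)))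
    MeasureTheory.volume 0 1 := by
  have h := (intervalIntegral.intervalIntegrable_rpow' (a := 0) (b := 1)
    (r := -(1/2)) (by norm_num)).comp_sub_left 1
  norm_num at h
  exact h.symm.const_mul _

lemma abs_f'_le {x : ℝ} (hx : x ∈ Set.Ioo (0:ℝ) 1) :
    ‖x * ellK x ^ 2 - 2 * x * ellE x * ellK x‖ ≤ 2*π^2 * ((1-x) ^ (-(1/2) : ℝ)) := by
  obtain ⟨hx0, hx1⟩ := hx
  have hx2 : x^2 < 1 := by nlinarith
  have hxx : (0:ℝ) < 1 - x^2 := by linarith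
  have h1x : (0:ℝ) < 1 - x := by linarith
  have hK0 := ellK_nonneg hx2
  have hE0 := ellE_nonneg (x := x)
  have hE := ellE_le (x := x)
  have hKb := ellK_le_main hx0.le hx1
  have hc0 : 0 < Real.sqrt (Real.sqrt (1 - x^2)) := Real.sqrt_pos.2 (Real.sqrt_pos.2 hxx)
  have hc1 : Real.sqrt (Real.sqrt (1 - x^2)) ≤ 1 :=
    Real.sqrt_le_one.2 (Real.sqrt_le_one.2 (by nlinarith))
  have hc2 : Real.sqrt (Real.sqrt (1 - x^2)) ^ 2 = Real.sqrt (1 - x^2) :=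
    Real.sq_sqrt (Real.sqrt_nonneg _)
  have hsqpos : (0:ℝ) < Real.sqrt (1 - x^2) := Real.sqrt_pos.2 hxx
  have hsx : Real.sqrt (1 - x) ≤ Real.sqrt (1 - x^2) := Real.sqrt_le_sqrt (by nlinarith)
  have hsxpos : (0:ℝ) < Real.sqrt (1 - x) := Real.sqrt_pos.2 h1x
  -- K² ≤ π²/√(1-x²)
  have hK2 : ellK x ^ 2 ≤ π^2 / Real.sqrt (1 - x^2) := by
    calc ellK x ^2 ≤ (π / Real.sqrt (Real.sqrt (1 - x^2)))^2 := pow_le_pow_left₀ hK0 hKb 2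
    _ = π^2 / Real.sqrt (1 - x^2) := by rw [div_pow, hc2]
  -- πK ≤ π²/√(1-x²)
  have hKpi : π * ellK x ≤ π^2 / Real.sqrt (1 - x^2) := by
    have h1 : ellK x ≤ π / Real.sqrt (1 - x^2) := by
      calc ellK x ≤ π / Real.sqrt (Real.sqrt (1 - x^2)) := hKb
      _ ≤ π / Real.sqrt (1 - x^2) := by
          have hbe : Real.sqrt (1 - x^2) ≤ Real.sqrt (Real.sqrt (1-x^2)) := by
            nlinarith [hc2, hc0, hc1]
          gcongr
    calc π * ellK x ≤ π * (π / Real.sqrt (1 - x^2)) :=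
          mul_le_mul_of_nonneg_left h1 Real.pi_pos.le
    _ = π^2 / Real.sqrt (1 - x^2) := by ring
  have hrpow : (1-x) ^ (-(1/2) : ℝ) = 1 / Real.sqrt (1-x) := by
    rw [Real.rpow_neg h1x.le, ← Real.sqrt_eq_rpow, one_div]
  rw [hrpow]
  have habs : ‖x * ellK x ^ 2 - 2 * x * ellE x * ellK x‖
      ≤ ellK x ^2 + π * ellK x := by
    rw [Real.norm_eq_abs, abs_sub_le_iff]
    have hm1 : (1 - x) * ellK x ^2 ≥ 0 := by nlinarith [sq_nonneg (ellK x)]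
    have hm2 : x * ellE x * ellK x ≥ 0 := by positivity
    have hm3 : (π/2 - ellE x) * ellK x ≥ 0 := mul_nonneg (by linarith) hK0
    have hm4 : (1 - x) * (ellE x * ellK x) ≥ 0 := by
      apply mul_nonneg (by linarith) (mul_nonneg hE0 hK0)
    constructor <;> nlinarith [hK0, hE0, hE, sq_nonneg (ellK x), Real.pi_pos]
  calc ‖x * ellK x ^ 2 - 2 * x * ellE x * ellK x‖ ≤ ellK x ^2 + π * ellK x := habs
  _ ≤ π^2 / Real.sqrt (1 - x^2) + π^2 / Real.sqrt (1 - x^2) := add_le_add hK2 hKpi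
  _ = 2 * π^2 / Real.sqrt (1 - x^2) := by ring
  _ ≤ 2 * π^2 / Real.sqrt (1 - x) := by
      gcongr
  _ = 2*π^2 * (1 / Real.sqrt (1-x)) := by ring

lemma intable_f' : IntervalIntegrable (fun x => x * ellK x ^ 2 - 2 * x * ellE x * ellK x)
    MeasureTheory.volume 0 1 := by
  rw [intervalIntegrable_iff, Set.uIoc_of_le zero_le_one]
  have hIoo : MeasureTheory.volume.restrict (Set.Ioc (0:ℝ) 1)
      = MeasureTheory.volume.restrict (Set.Ioo (0:ℝ) 1) :=
    (MeasureTheory.Measure.restrict_congr_set MeasureTheory.Ioo_ae_eq_Ioc).symm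
  rw [MeasureTheory.IntegrableOn, hIoo]
  apply MeasureTheory.Integrable.mono' (g := fun x : ℝ => 2*π^2 * ((1-x) ^ (-(1/2) : ℝ)))
  · have h := bound_intable
    rw [intervalIntegrable_iff, Set.uIoc_of_le zero_le_one] at h
    rw [← hIoo]
    exact h
  · exact contOn_f'.aestronglyMeasurable measurableSet_Ioo
  · rw [MeasureTheory.ae_restrict_iff' measurableSet_Ioo]
    filter_upwards with x hx
    exact abs_f'_le hx

theorem stmt_17 :
    (∫ x in (0:ℝ)..1, (x * ellK x ^ 2 - 2 * x * ellE x * ellK x)) = -1/2 := by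
  have hFa : Filter.Tendsto Fell (nhdsWithin 0 (Set.Ioi 0)) (nhds 0) := by
    have t1 : Filter.Tendsto (fun x : ℝ => (x^2 - 1)/2)
        (nhdsWithin 0 (Set.Ioi 0)) (nhds (-(1/2))) := by
      have hc : Continuous (fun x : ℝ => (x^2 - 1)/2) := by continuity
      have := (hc.tendsto 0).mono_left (nhdsWithin_le_nhds (s := Set.Ioi (0:ℝ)))
      norm_num at this
      convert this using 2
    have t1x : Filter.Tendsto (fun x : ℝ => (1 - x^2))
        (nhdsWithin 0 (Set.Ioi 0)) (nhds 1) := by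
      have hc : Continuous (fun x : ℝ => 1 - x^2) := by continuity
      have := (hc.tendsto 0).mono_left (nhdsWithin_le_nhds (s := Set.Ioi (0:ℝ)))
      norm_num at this
      exact this
    have tt := ((t1.mul (tendsto_ellK_zero.pow 2)).add
      (t1x.mul (tendsto_ellK_zero.mul tendsto_ellE_zero))).sub
      ((tendsto_ellE_zero.pow 2).div_const 2)
    have : (-(1/2) * (π/2)^2 + 1 * ((π/2) * (π/2)) - (π/2)^2/2) = 0 := by ring
    rw [this] at tt
    exact tt
  have hFb : Filter.Tendsto Fell (nhdsWithin 1 (Set.Iio 1)) (nhds (-1/2)) := by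
    have tt := ((tendsto_K2.const_mul (-(1/2))).add tendsto_KE).sub
      ((tendsto_ellE_one.pow 2).div_const 2)
    have hval : (-(1/2) * 0 + 0 - 1^2/2 : ℝ) = -1/2 := by norm_num
    rw [hval] at tt
    apply tt.congr
    intro x
    simp only [Fell]
    ring
  have key := intervalIntegral.integral_eq_sub_of_hasDerivAt_of_tendsto zero_lt_one
    (fun x hx => hasDerivAt_Fell hx) intable_f' hFa hFb
  rw [key]
  norm_num
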